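/- Let S = {x ∈ ℓ¹ : x_0 = 0 and ∑_{k=1}^∞ x_k = 0}. Then the pre-annihilator of S in c₀ is ^⊥S = {ν ∈ c₀ : ν_k = 0 for all k ≥ 1} (i.e., sequences supported on the zeroth coordinate). -/

import Mathlib

private lemma single_coe (i : ℕ) (a : ℝ) (j : ℕ) :
    (lp.single 1 i a : lp (fun _ : ℕ => ℝ) 1) j = if j = i then a else 0 := by
  rw [lp.single_apply]
  split_ifs with h
  · subst h; simp
  · simp [Pi.single_apply, h]

set_option maxHeartbeats 1000000 in
/-- For `S = {x ∈ ℓ¹ : x_0 = 0, ∑_{k≥1} x_k = 0}`, the pre-annihilator of `S` in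
c₀ consists exactly of the null sequences supported on the zeroth coordinate. -/
theorem preannihilator_of_tail_sum_zero_subspace
    (ν : lp (fun _ : ℕ => ℝ) ⊤)
    (hν₀ : Filter.Tendsto (fun k => ν k) Filter.atTop (nhds 0)) :
    (∀ x ∈ {x : lp (fun _ : ℕ => ℝ) 1 | x 0 = 0 ∧ ∑' k : ℕ, x (k + 1) = 0},
        ∑' k : ℕ, ν k * x k = 0)
      ↔ ∀ k : ℕ, 1 ≤ k → ν k = 0 := by
  constructor
  · intro H k hk
    -- step: ν (m+1) = ν (m+2) for all m
    have step : ∀ m : ℕ, ν (m + 1) = ν (m + 2) := by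
      intro m
      set x : lp (fun _ : ℕ => ℝ) 1 :=
        lp.single 1 (m + 1) (1 : ℝ) - lp.single 1 (m + 2) (1 : ℝ) with hx
      have hxcoe : ∀ j : ℕ, x j = (if j = m + 1 then (1:ℝ) else 0)
          - (if j = m + 2 then (1:ℝ) else 0) := by
        intro j
        simp [hx, single_coe, Pi.single_apply]
      have hmem : x ∈ {x : lp (fun _ : ℕ => ℝ) 1 | x 0 = 0 ∧ ∑' k : ℕ, x (k + 1) = 0} := by
        constructor
        · simp [hxcoe 0]
        · have : (fun k : ℕ => x (k + 1)) = fun k =>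
              (if k = m then (1:ℝ) else 0) + (if k = m + 1 then (-1:ℝ) else 0) := by
            funext k
            rw [hxcoe]
            split_ifs <;> simp_all
          rw [this, Summable.tsum_add ⟨1, hasSum_ite_eq m 1⟩ ⟨-1, hasSum_ite_eq (m+1) (-1)⟩,
            tsum_ite_eq, tsum_ite_eq]
          ring
      have := H x hmem
      have hfun : (fun k : ℕ => ν k * x k) = fun k =>
          (if k = m + 1 then ν (m+1) else 0) + (if k = m + 2 then -ν (m+2) else 0) := by
        funext k
        rw [hxcoe]
        split_ifs <;> simp_all
      rw [hfun, Summable.tsum_add ⟨_, hasSum_ite_eq (m+1) (ν (m+1))⟩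
          ⟨_, hasSum_ite_eq (m+2) (-ν (m+2))⟩, tsum_ite_eq, tsum_ite_eq] at this
      linarith
    -- ν k = ν (k + n) for all n
    have const : ∀ n : ℕ, ν k = ν (k + n) := by
      intro n
      induction n with
      | zero => rfl
      | succ n ih =>
        rw [ih]
        obtain ⟨m, hm⟩ : ∃ m, k + n = m + 1 := ⟨k + n - 1, by omega⟩
        have h2 : k + (n + 1) = m + 2 := by omega
        rw [hm, h2]
        exact step m
    have hcomp : Filter.Tendsto (fun n : ℕ => k + n) Filter.atTop Filter.atTop :=
      Filter.tendsto_atTop_mono (fun n => Nat.le_add_left n k) Filter.tendsto_id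
    have h1 : Filter.Tendsto (fun n : ℕ => ν (k + n)) Filter.atTop (nhds 0) :=
      hν₀.comp hcomp
    have h2 : Filter.Tendsto (fun n : ℕ => ν (k + n)) Filter.atTop (nhds (ν k)) := by
      have : (fun n : ℕ => ν (k + n)) = fun _ => ν k := by
        funext n; exact (const n).symm
      rw [this]
      exact tendsto_const_nhds
    exact tendsto_nhds_unique h2 h1
  · intro H x hx
    have : (fun k : ℕ => ν k * x k) = fun _ => 0 := by
      funext k
      cases k with
      | zero => rw [hx.1, mul_zero]
      | succ n => rw [H (n+1) (by omega), zero_mul]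
    rw [this, tsum_zero]
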